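/- Let X be a proper geodesic metric space, and let A and B be nonempty closed subsets of X with d = d_H(A, B) < ∞. For each t ∈ [0, d] set C_t = B_t(A) ∩ B_{d−t}(B). Then C_0 = A, C_d = B, and for all 0 ≤ t ≤ s ≤ d one has d_H(C_t, C_s) = s − t; in particular, t ↦ C_t is a shortest geodesic in the space of nonempty closed subsets of X with the Hausdorff metric, whose length equals the distance d between its endpoints. -/

import Mathlib

open scoped ENNReal

noncomputable section

/-- Ultrametric pseudodistance: infimum over chains from `x` to `y` of the
maximal edge length of the chain. -/
noncomputable def ultraDist {X : Type*} [MetricSpace X] (x y : X) : ℝ≥0∞ :=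
  ⨅ (n : ℕ) (f : Fin (n + 1) → X) (_ : f 0 = x) (_ : f (Fin.last n) = y),
    ⨆ i : Fin n, edist (f i.castSucc) (f i.succ)

/-- Ultrametric pseudodiameter. -/
noncomputable def ultraDiam (X : Type*) [MetricSpace X] : ℝ≥0∞ :=
  ⨆ (x : X) (y : X), ultraDist x y

/-- A correspondence between `X` and `Y`: a relation whose projections are surjective. -/
def IsCorrespondence {X Y : Type*} (R : Set (X × Y)) : Prop :=
  (∀ x : X, ∃ y : Y, (x, y) ∈ R) ∧ (∀ y : Y, ∃ x : X, (x, y) ∈ R)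

/-- Distortion of a relation. -/
noncomputable def distortion {X Y : Type*} [MetricSpace X] [MetricSpace Y]
    (R : Set (X × Y)) : ℝ≥0∞ :=
  ⨆ (p ∈ R) (q ∈ R), ENNReal.ofReal |dist p.1 q.1 - dist p.2 q.2|

/-- Gromov–Hausdorff distance: half the infimal distortion of correspondences. -/
noncomputable def ghDist (X Y : Type*) [MetricSpace X] [MetricSpace Y] : ℝ≥0∞ :=
  (⨅ (R : Set (X × Y)) (_ : IsCorrespondence R), distortion R) / 2


/-- A metric space is geodesic if every two points are joined by an isometric
(shortest) path parameterized by `[0, dist x y]`. -/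
def IsGeodesicSpace (X : Type*) [MetricSpace X] : Prop :=
  ∀ x y : X, ∃ γ : ℝ → X, γ 0 = x ∧ γ (dist x y) = y ∧
    ∀ s t : ℝ, s ∈ Set.Icc (0 : ℝ) (dist x y) → t ∈ Set.Icc (0 : ℝ) (dist x y) →
      dist (γ s) (γ t) = |s - t|

/-- Membership in a cthickening in terms of `infDist`, for a nonempty set. -/
lemma mem_cthick_iff' {X : Type*} [MetricSpace X] {S : Set X} (hS : S.Nonempty)
    {δ : ℝ} (hδ : 0 ≤ δ) (x : X) :
    x ∈ Metric.cthickening δ S ↔ Metric.infDist x S ≤ δ := by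
  rw [Metric.mem_cthickening_iff,
    ENNReal.le_ofReal_iff_toReal_le (Metric.infEdist_ne_top hS) hδ]
  rfl

/-- In a proper geodesic space, from any point one can move distance `≤ r`
towards a closed nonempty set, decreasing `infDist` accordingly. -/
lemma move_toward {X : Type*} [MetricSpace X] [ProperSpace X]
    (hgeo : IsGeodesicSpace X) {S : Set X} (hSc : IsClosed S) (hSn : S.Nonempty)
    (x : X) (r : ℝ) (hr : 0 ≤ r) :
    ∃ y, dist x y ≤ r ∧ Metric.infDist y S ≤ max (Metric.infDist x S - r) 0 := by
  obtain ⟨b, hbS, hb⟩ := hSc.exists_infDist_eq_dist hSn x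
  obtain ⟨γ, h0, hL, hiso⟩ := hgeo x b
  by_cases h : r ≤ dist x b
  · refine ⟨γ r, ?_, ?_⟩
    · have := hiso 0 r ⟨le_refl 0, dist_nonneg⟩ ⟨hr, h⟩
      rw [h0] at this
      rw [this, abs_of_nonpos (by linarith)]
      linarith
    · have := hiso r (dist x b) ⟨hr, h⟩ ⟨dist_nonneg, le_refl _⟩
      rw [hL] at this
      refine le_trans (le_trans (Metric.infDist_le_dist_of_mem hbS) ?_) (le_max_left _ _)
      rw [this, abs_of_nonpos (by linarith), hb]
      linarith
  · refine ⟨b, by linarith, ?_⟩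
    rw [Metric.infDist_zero_of_mem hbS]
    exact le_max_right _ _

/-- in a proper geodesic space, for closed nonempty `A`, `B` at
finite Hausdorff distance `d`, the family `C_t = B_t(A) ∩ B_{d−t}(B)` satisfies
`C_0 = A`, `C_d = B` and `d_H(C_t, C_s) = s − t` for `0 ≤ t ≤ s ≤ d`; i.e. it is
a shortest geodesic for the Hausdorff metric whose length is the distance `d`
between its endpoints. -/
theorem canonical_hausdorff_geodesic {X : Type*} [MetricSpace X] [ProperSpace X]
    (hgeo : IsGeodesicSpace X) (A B : Set X) (hA : A.Nonempty) (hB : B.Nonempty)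
    (hAc : IsClosed A) (hBc : IsClosed B)
    (hfin : EMetric.hausdorffEdist A B ≠ ⊤)
    (d : ℝ) (hd : d = (EMetric.hausdorffEdist A B).toReal) :
    Metric.cthickening 0 A ∩ Metric.cthickening (d - 0) B = A ∧
    Metric.cthickening d A ∩ Metric.cthickening (d - d) B = B ∧
    ∀ t s : ℝ, 0 ≤ t → t ≤ s → s ≤ d →
      EMetric.hausdorffEdist
          (Metric.cthickening t A ∩ Metric.cthickening (d - t) B)
          (Metric.cthickening s A ∩ Metric.cthickening (d - s) B)
        = ENNReal.ofReal (s - t) := by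
  have hd0 : 0 ≤ d := hd ▸ ENNReal.toReal_nonneg
  have hAB : EMetric.hausdorffEdist A B = ENNReal.ofReal d := by
    rw [hd, ENNReal.ofReal_toReal hfin]
  have hBA : EMetric.hausdorffEdist B A = ENNReal.ofReal d := by
    rw [← hAB]; exact EMetric.hausdorffEdist_comm
  have hAin : ∀ a ∈ A, Metric.infDist a B ≤ d := by
    intro a ha
    have h1 : EMetric.infEdist a B ≤ ENNReal.ofReal d :=
      hAB ▸ EMetric.infEdist_le_hausdorffEdist_of_mem ha
    exact (ENNReal.le_ofReal_iff_toReal_le (Metric.infEdist_ne_top hB) hd0).mp h1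
  have hBin : ∀ b ∈ B, Metric.infDist b A ≤ d := by
    intro b hb
    have h1 : EMetric.infEdist b A ≤ ENNReal.ofReal d :=
      hBA ▸ EMetric.infEdist_le_hausdorffEdist_of_mem hb
    exact (ENNReal.le_ofReal_iff_toReal_le (Metric.infEdist_ne_top hA) hd0).mp h1
  have hC0 : Metric.cthickening 0 A ∩ Metric.cthickening (d - 0) B = A := by
    rw [sub_zero, Metric.cthickening_zero, hAc.closure_eq]
    refine Set.inter_eq_left.mpr fun a ha => ?_
    exact (mem_cthick_iff' hB hd0 a).mpr (hAin a ha)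
  have hCd : Metric.cthickening d A ∩ Metric.cthickening (d - d) B = B := by
    rw [sub_self, Metric.cthickening_zero, hBc.closure_eq]
    refine Set.inter_eq_right.mpr fun b hb => ?_
    exact (mem_cthick_iff' hA hd0 b).mpr (hBin b hb)
  -- the upper bound
  have hupper : ∀ t s : ℝ, 0 ≤ t → t ≤ s → s ≤ d →
      EMetric.hausdorffEdist
          (Metric.cthickening t A ∩ Metric.cthickening (d - t) B)
          (Metric.cthickening s A ∩ Metric.cthickening (d - s) B)
        ≤ ENNReal.ofReal (s - t) := by
    intro t s ht hts hsd
    have hst0 : (0:ℝ) ≤ s - t := by linarith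
    apply EMetric.hausdorffEdist_le_of_mem_edist
    · rintro x ⟨hxA, hxB⟩
      rw [mem_cthick_iff' hA (by linarith) x] at hxA
      rw [mem_cthick_iff' hB (by linarith) x] at hxB
      obtain ⟨y, hxy, hyB⟩ := move_toward hgeo hBc hB x (s - t) hst0
      refine ⟨y, ⟨?_, ?_⟩, (edist_le_ofReal hst0).mpr hxy⟩
      · rw [mem_cthick_iff' hA (by linarith) y]
        calc Metric.infDist y A ≤ Metric.infDist x A + dist y x :=
              Metric.infDist_le_infDist_add_dist
          _ ≤ t + (s - t) := by rw [dist_comm]; exact add_le_add hxA hxy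
          _ = s := by ring
      · rw [mem_cthick_iff' hB (by linarith) y]
        exact le_trans hyB (max_le (by linarith) (by linarith))
    · rintro y ⟨hyA, hyB⟩
      rw [mem_cthick_iff' hA (by linarith) y] at hyA
      rw [mem_cthick_iff' hB (by linarith) y] at hyB
      obtain ⟨x, hyx, hxA⟩ := move_toward hgeo hAc hA y (s - t) hst0
      refine ⟨x, ⟨?_, ?_⟩, (edist_le_ofReal hst0).mpr hyx⟩
      · rw [mem_cthick_iff' hA (by linarith) x]
        exact le_trans hxA (max_le (by linarith) (by linarith))
      · rw [mem_cthick_iff' hB (by linarith) x]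
        calc Metric.infDist x B ≤ Metric.infDist y B + dist x y :=
              Metric.infDist_le_infDist_add_dist
          _ ≤ (d - s) + (s - t) := by rw [dist_comm]; exact add_le_add hyB hyx
          _ = d - t := by ring
  refine ⟨hC0, hCd, fun t s ht hts hsd => ?_⟩
  refine le_antisymm (hupper t s ht hts hsd) ?_
  -- lower bound via the triangle inequality
  set Ct := Metric.cthickening t A ∩ Metric.cthickening (d - t) B with hCt
  set Cs := Metric.cthickening s A ∩ Metric.cthickening (d - s) B with hCs
  have h1 : EMetric.hausdorffEdist A Ct ≤ ENNReal.ofReal t := by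
    have := hupper 0 t le_rfl ht (by linarith)
    rwa [hC0, sub_zero] at this
  have h2 : EMetric.hausdorffEdist Cs B ≤ ENNReal.ofReal (d - s) := by
    have := hupper s d (by linarith) hsd le_rfl
    rwa [hCd] at this
  have hne : EMetric.hausdorffEdist Ct Cs ≠ ⊤ :=
    (lt_of_le_of_lt (hupper t s ht hts hsd) ENNReal.ofReal_lt_top).ne
  have htri : ENNReal.ofReal d ≤
      ENNReal.ofReal t + EMetric.hausdorffEdist Ct Cs + ENNReal.ofReal (d - s) := by
    calc ENNReal.ofReal d = EMetric.hausdorffEdist A B := hAB.symm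
      _ ≤ EMetric.hausdorffEdist A Ct + EMetric.hausdorffEdist Ct B :=
          EMetric.hausdorffEdist_triangle
      _ ≤ EMetric.hausdorffEdist A Ct +
            (EMetric.hausdorffEdist Ct Cs + EMetric.hausdorffEdist Cs B) :=
          add_le_add le_rfl EMetric.hausdorffEdist_triangle
      _ ≤ ENNReal.ofReal t + (EMetric.hausdorffEdist Ct Cs + ENNReal.ofReal (d - s)) :=
          add_le_add h1 (add_le_add le_rfl h2)
      _ = ENNReal.ofReal t + EMetric.hausdorffEdist Ct Cs + ENNReal.ofReal (d - s) := by
          ring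
  have hreal : d ≤ t + (EMetric.hausdorffEdist Ct Cs).toReal + (d - s) := by
    have hfin2 : ENNReal.ofReal t + EMetric.hausdorffEdist Ct Cs + ENNReal.ofReal (d - s)
        ≠ ⊤ := by
      simp [ENNReal.add_ne_top, hne]
    have := ENNReal.toReal_mono hfin2 htri
    rw [ENNReal.toReal_add (by simp [ENNReal.add_ne_top, hne]) (by simp),
      ENNReal.toReal_add (by simp) hne, ENNReal.toReal_ofReal ht,
      ENNReal.toReal_ofReal (show (0:ℝ) ≤ d - s by linarith), ENNReal.toReal_ofReal hd0] at this
    exact this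
  calc ENNReal.ofReal (s - t) ≤ ENNReal.ofReal (EMetric.hausdorffEdist Ct Cs).toReal :=
        ENNReal.ofReal_le_ofReal (by linarith)
    _ = EMetric.hausdorffEdist Ct Cs := ENNReal.ofReal_toReal hne

end
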